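/- For every s ≥ 2, the integral I(s) = ∫_ℝ |sin(y)/y|^s dy is finite, and there exist absolute constants 0 < c ≤ C < ∞ such that c·s^(−1/2) ≤ I(s) ≤ C·s^(−1/2) for all s ≥ 2. -/

import Mathlib

open MeasureTheory Real Set

noncomputable def Fs (s : ℝ) (y : ℝ) : ℝ := |if y = 0 then (1 : ℝ) else Real.sin y / y| ^ s



lemma Fs_meas {s : ℝ} (hs : 0 ≤ s) : Measurable (Fs s) := by
  have h1 : Measurable fun y : ℝ => if y = 0 then (1:ℝ) else Real.sin y / y :=
    Measurable.ite measurableSet_eq measurable_const (Real.measurable_sin.div measurable_id)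
  exact (Real.continuous_rpow_const hs).measurable.comp h1.abs

lemma Fs_nonneg (s y : ℝ) : 0 ≤ Fs s y := Real.rpow_nonneg (abs_nonneg _) s

lemma Fs_even (s y : ℝ) : Fs s (-y) = Fs s y := by
  simp [Fs, neg_eq_zero, Real.sin_neg, neg_div_neg_eq]

lemma base_le_one (y : ℝ) : |if y = 0 then (1:ℝ) else Real.sin y / y| ≤ 1 := by
  by_cases h : y = 0
  · simp [h]
  · rw [if_neg h, abs_div, div_le_one (abs_pos.mpr h)]
    exact Real.abs_sin_le_abs

lemma Fs_le_one {s : ℝ} (hs : 0 ≤ s) (y : ℝ) : Fs s y ≤ 1 :=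
  Real.rpow_le_one (abs_nonneg _) (base_le_one y) hs

lemma Fs_outer {s : ℝ} (hs : 0 ≤ s) {y : ℝ} (hy : 1 ≤ y) : Fs s y ≤ y ^ (-s) := by
  have hy0 : (0:ℝ) < y := lt_of_lt_of_le one_pos hy
  have hb : |if y = 0 then (1:ℝ) else Real.sin y / y| ≤ y⁻¹ := by
    rw [if_neg hy0.ne', abs_div, abs_of_pos hy0]
    calc |Real.sin y| / y ≤ 1 / y := by gcongr; exact Real.abs_sin_le_one y
      _ = y⁻¹ := one_div y
  calc Fs s y ≤ (y⁻¹) ^ s := Real.rpow_le_rpow (abs_nonneg _) hb hs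
    _ = y ^ (-s) := by rw [Real.inv_rpow hy0.le, ← Real.rpow_neg hy0.le]

lemma Fs_inner {s : ℝ} (hs : 0 ≤ s) {y : ℝ} (hy : |y| ≤ 1) :
    Fs s y ≤ Real.exp (-(s/12) * y^2) := by
  by_cases h0 : y = 0
  · simp [Fs, h0, Real.one_rpow]
  have ht0 : 0 < |y| := abs_pos.mpr h0
  set t := |y| with htdef
  have hsin : Real.sin t ≤ t - t^3/12 := by
    have hb := le_of_abs_le (Real.sin_bound (by rwa [abs_abs] : |t| ≤ 1))
    rw [abs_of_pos ht0] at hb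
    have ht1 : t ≤ 1 := by rwa [htdef]
    have h4 : t^4 ≤ t^3 := by nlinarith [pow_nonneg ht0.le 3]
    nlinarith [pow_nonneg ht0.le 3]
  have habs_sin : |Real.sin y| = Real.sin t := by
    rcases le_or_gt 0 y with h | h
    · rw [htdef, abs_of_nonneg h,
        abs_of_nonneg (Real.sin_nonneg_of_nonneg_of_le_pi h
          (by nlinarith [Real.pi_gt_three, abs_of_nonneg h]))]
    · rw [htdef, abs_of_neg h, Real.sin_neg, abs_of_nonpos
        (Real.sin_nonpos_of_nonpos_of_neg_pi_le h.le (by nlinarith [Real.pi_gt_three, abs_of_neg h]))]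
  have hbase : |if y = 0 then (1:ℝ) else Real.sin y / y| ≤ 1 - y^2/12 := by
    rw [if_neg h0, abs_div, habs_sin]
    calc Real.sin t / |y| ≤ (t - t^3/12) / t := by rw [← htdef]; gcongr
      _ = 1 - t^2/12 := by field_simp
      _ = 1 - y^2/12 := by rw [htdef, sq_abs]
  have hy2 : y^2 ≤ 1 := by rw [← sq_abs]; nlinarith [ht0.le]
  have h2 : (0:ℝ) ≤ 1 - y^2/12 := by nlinarith
  calc Fs s y ≤ (1 - y^2/12) ^ s := Real.rpow_le_rpow (abs_nonneg _) hbase hs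
    _ ≤ (Real.exp (-(y^2/12))) ^ s :=
        Real.rpow_le_rpow h2 (by linarith [Real.add_one_le_exp (-(y^2/12))]) hs
    _ = Real.exp (-(s/12) * y^2) := by rw [← Real.exp_mul]; ring_nf

lemma Fs_lower {s : ℝ} (hs : 2 ≤ s) {y : ℝ} (hy0 : 0 ≤ y) (hy : y^2 ≤ s⁻¹) :
    3/4 ≤ Fs s y := by
  have hs0 : (0:ℝ) < s := by linarith
  rcases eq_or_lt_of_le hy0 with h | h
  · simp [Fs, ← h, Real.one_rpow]
    norm_num
  have hys : y^2 * s ≤ 1 := by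
    calc y^2 * s ≤ s⁻¹ * s := by gcongr
      _ = 1 := inv_mul_cancel₀ hs0.ne'
  have hy1 : y ≤ 1 := by nlinarith
  have hsin := Real.sin_gt_sub_cube h
  have h3 : y^3 ≤ y * s⁻¹ := by
    calc y^3 = y * y^2 := by ring
      _ ≤ y * s⁻¹ := by gcongr
  have hq : 1 - 1/(4*s) ≤ Real.sin y / y := by
    rw [le_div_iff₀ h]
    have e : (1:ℝ)/(4*s) = s⁻¹/4 := by rw [one_div, mul_inv]; ring
    rw [e]
    nlinarith
  have hfrac : 1/(4*s) ≤ 1/8 := by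
    apply one_div_le_one_div_of_le <;> linarith
  have hpos : (0:ℝ) < 1 - 1/(4*s) := by linarith
  have hbase : 1 - 1/(4*s) ≤ |if y = 0 then (1:ℝ) else Real.sin y / y| := by
    rw [if_neg (ne_of_gt h)]
    exact hq.trans (le_abs_self _)
  have hfp : (0:ℝ) < 1/(4*s) := by positivity
  have hber : (3:ℝ)/4 ≤ (1 - 1/(4*s)) ^ s := by
    have hb := one_add_mul_self_le_rpow_one_add (s := -(1/(4*s))) (by linarith) (by linarith : 1 ≤ s)
    have e1 : 1 + -(1/(4*s)) = 1 - 1/(4*s) := by ring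
    have e2 : s * -(1/(4*s)) = -(1/4) := by field_simp
    rw [e1, e2] at hb
    linarith
  calc (3:ℝ)/4 ≤ (1 - 1/(4*s)) ^ s := hber
    _ ≤ Fs s y := Real.rpow_le_rpow hpos.le hbase (by linarith)


lemma Fs_integrable {s : ℝ} (hs : 2 ≤ s) : Integrable (Fs s) := by
  have hmeas : Measurable (Fs s) := Fs_meas (by linarith)
  have hnn : ∀ y, 0 ≤ Fs s y := Fs_nonneg s
  have hle1 : ∀ y, Fs s y ≤ 1 := Fs_le_one (by linarith)
  have hs0 : (0:ℝ) ≤ s := by linarith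
  apply Integrable.mono' (integrable_inv_one_add_sq.const_mul 2) hmeas.aestronglyMeasurable
  filter_upwards with y
  rw [Real.norm_eq_abs, abs_of_nonneg (hnn y)]
  have hp : (0:ℝ) < 1 + y^2 := by positivity
  rcases le_or_gt (|y|) 1 with h | h
  · have hy2 : y^2 ≤ 1 := by rw [← sq_abs]; nlinarith [abs_nonneg y]
    calc Fs s y ≤ 1 := hle1 y
      _ ≤ 2 * (1+y^2)⁻¹ := by
          rw [show (2:ℝ)*(1+y^2)⁻¹ = 2/(1+y^2) by ring]
          exact (one_le_div hp).mpr (by linarith)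
  · have hy0 : (0:ℝ) < |y| := by linarith
    have hne : y ≠ 0 := by intro h0; rw [h0, abs_zero] at hy0; exact lt_irrefl _ hy0
    have hb : |if y = 0 then (1:ℝ) else Real.sin y / y| ≤ |y|⁻¹ := by
      rw [if_neg hne, abs_div]
      calc |Real.sin y| / |y| ≤ 1 / |y| := by gcongr; exact Real.abs_sin_le_one y
        _ = |y|⁻¹ := one_div _
    have h1 : Fs s y ≤ (|y|⁻¹) ^ s := Real.rpow_le_rpow (abs_nonneg _) hb hs0
    have h2 : (|y|⁻¹) ^ s ≤ (|y|⁻¹) ^ (2:ℝ) :=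
      Real.rpow_le_rpow_of_exponent_ge (by positivity) (inv_le_one_of_one_le₀ h.le) hs
    have h3 : (|y|⁻¹) ^ (2:ℝ) = (y^2)⁻¹ := by
      rw [show ((2:ℝ)) = ((2:ℕ):ℝ) by norm_num, Real.rpow_natCast, inv_pow, sq_abs]
    have h4 : (y^2)⁻¹ ≤ 2 * (1+y^2)⁻¹ := by
      have hy2 : (0:ℝ) < y^2 := by positivity
      rw [show 2*(1+y^2)⁻¹ = 2/(1+y^2) by ring, show (y^2)⁻¹ = 1/y^2 by ring,
        div_le_div_iff₀ hy2 hp]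
      nlinarith [sq_abs y, abs_nonneg y]
    linarith

/-- `I(s) = ∫_ℝ |sin y / y|^s dy` is finite for `s ≥ 2` and
is two-sidedly comparable to `s^(-1/2)`. -/
theorem sinc_power_integral_asymptotics :
    ∃ c C : ℝ, 0 < c ∧ c ≤ C ∧
      ∀ s : ℝ, 2 ≤ s →
        Integrable (fun y : ℝ => |if y = 0 then (1 : ℝ) else Real.sin y / y| ^ s) ∧
        c * s ^ (-(1 : ℝ) / 2) ≤
          (∫ y : ℝ, |if y = 0 then (1 : ℝ) else Real.sin y / y| ^ s) ∧
        (∫ y : ℝ, |if y = 0 then (1 : ℝ) else Real.sin y / y| ^ s) ≤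
          C * s ^ (-(1 : ℝ) / 2) := by
  refine ⟨3/4, 10, by norm_num, by norm_num, fun s hs => ?_⟩
  have hs0 : (0:ℝ) < s := by linarith
  have hInt : Integrable (Fs s) := Fs_integrable hs
  have hIeq : (∫ y : ℝ, |if y = 0 then (1 : ℝ) else Real.sin y / y| ^ s) = ∫ y, Fs s y := rfl
  set t := s ^ (-(1:ℝ)/2) with htdef
  have ht0 : 0 < t := Real.rpow_pos_of_pos hs0 _
  have hts : t = (Real.sqrt s)⁻¹ := by
    rw [htdef, neg_div, Real.rpow_neg hs0.le, Real.sqrt_eq_rpow]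
  have htt : t * t = s⁻¹ := by
    rw [htdef, ← Real.rpow_add hs0]
    norm_num [Real.rpow_neg_one]
  have ht34 : t ≤ 3/4 := by
    rw [hts]
    have h43 : (4:ℝ)/3 ≤ Real.sqrt s := by
      rw [show (4:ℝ)/3 = Real.sqrt ((4/3)^2) from (Real.sqrt_sq (by norm_num)).symm]
      exact Real.sqrt_le_sqrt (by nlinarith)
    calc (Real.sqrt s)⁻¹ ≤ ((4:ℝ)/3)⁻¹ := by
          exact inv_anti₀ (by norm_num) h43
      _ ≤ 3/4 := by norm_num
  -- lower bound
  have hlow : 3/4 * t ≤ ∫ y, Fs s y := by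
    have h1 : ∫ _y in Icc (0:ℝ) t, (3/4 : ℝ) ≤ ∫ y in Icc (0:ℝ) t, Fs s y := by
      apply setIntegral_mono_on
        (integrableOn_const (by simp)) hInt.integrableOn measurableSet_Icc
      intro y hy
      refine Fs_lower hs hy.1 ?_
      nlinarith [hy.1, hy.2, htt]
    have h2 : ∫ _y in Icc (0:ℝ) t, (3/4:ℝ) = 3/4 * t := by
      rw [setIntegral_const, Real.volume_real_Icc, smul_eq_mul,
        max_eq_left (by linarith : (0:ℝ) ≤ t - 0)]
      ring
    have h3 : ∫ y in Icc (0:ℝ) t, Fs s y ≤ ∫ y, Fs s y :=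
      setIntegral_le_integral hInt (Filter.Eventually.of_forall fun y => Fs_nonneg s y)
    linarith
  -- upper bound
  have hgauss_int : Integrable (fun y : ℝ => Real.exp (-(s/12) * y^2)) :=
    integrable_exp_neg_mul_sq (by linarith)
  have hupp : ∫ y, Fs s y ≤ 10 * t := by
    have hsplit : ∫ y, Fs s y =
        (∫ y in Icc (-1:ℝ) 1, Fs s y) + ∫ y in (Icc (-1:ℝ) 1)ᶜ, Fs s y :=
      (integral_add_compl measurableSet_Icc hInt).symm
    have h1 : ∫ y in Icc (-1:ℝ) 1, Fs s y ≤ ∫ y in Icc (-1:ℝ) 1, Real.exp (-(s/12)*y^2) :=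
      setIntegral_mono_on hInt.integrableOn hgauss_int.integrableOn measurableSet_Icc
        (fun y hy => Fs_inner (by linarith) (abs_le.mpr ⟨hy.1, hy.2⟩))
    have h2 : ∫ y in Icc (-1:ℝ) 1, Real.exp (-(s/12)*y^2) ≤ ∫ y : ℝ, Real.exp (-(s/12)*y^2) :=
      setIntegral_le_integral hgauss_int (Filter.Eventually.of_forall fun y => (Real.exp_pos _).le)
    have h3 : ∫ y : ℝ, Real.exp (-(s/12)*y^2) = Real.sqrt (π / (s/12)) := integral_gaussian _
    have h4 : Real.sqrt (π / (s/12)) ≤ 7 * t := by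
      rw [hts]
      have e : π/(s/12) = 12*π*s⁻¹ := by field_simp
      have h5 : Real.sqrt (12*π*s⁻¹) ≤ Real.sqrt (49 * s⁻¹) :=
        Real.sqrt_le_sqrt (by nlinarith [Real.pi_le_four, inv_nonneg.mpr hs0.le])
      have h6 : Real.sqrt (49*s⁻¹) = 7 * (Real.sqrt s)⁻¹ := by
        rw [show (49:ℝ)*s⁻¹ = (7*(Real.sqrt s)⁻¹)^2 from by
            rw [mul_pow, inv_pow, Real.sq_sqrt hs0.le]; norm_num,
          Real.sqrt_sq (by positivity)]
      rw [e]
      linarith [h6 ▸ h5]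
    have hcompl : ∫ y in (Icc (-1:ℝ) 1)ᶜ, Fs s y ≤ 3 * t := by
      have hIccc : (Icc (-1:ℝ) 1)ᶜ = Iio (-1) ∪ Ioi 1 := by
        ext x
        simp only [mem_compl_iff, mem_union, mem_Iio, mem_Ioi, mem_Icc, not_and_or, not_le]
      rw [hIccc]
      have hdisj : Disjoint (Iio (-1:ℝ)) (Ioi 1) := by
        rw [Set.disjoint_left]
        intro x hx hx'
        simp only [mem_Iio, mem_Ioi] at hx hx'
        linarith
      rw [setIntegral_union hdisj measurableSet_Ioi hInt.integrableOn hInt.integrableOn]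
      have heven : ∫ y in Iio (-1:ℝ), Fs s y = ∫ y in Ioi (1:ℝ), Fs s y := by
        rw [← integral_Iic_eq_integral_Iio, show ((-1:ℝ)) = -(1:ℝ) by norm_num,
          ← integral_comp_neg_Ioi]
        simp only [Fs_even]
      have htail_int : IntegrableOn (fun y:ℝ => y ^ (-s)) (Ioi 1) :=
        integrableOn_Ioi_rpow_of_lt (by linarith) one_pos
      have h5 : ∫ y in Ioi (1:ℝ), Fs s y ≤ ∫ y in Ioi (1:ℝ), y ^ (-s) :=
        setIntegral_mono_on hInt.integrableOn htail_int measurableSet_Ioi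
          (fun y hy => Fs_outer (by linarith) (le_of_lt hy))
      have h6 : ∫ y in Ioi (1:ℝ), y ^ (-s) = 1/(s-1) := by
        rw [integral_Ioi_rpow_of_lt (by linarith) one_pos, Real.one_rpow]
        rw [show (-1:ℝ)/(-s+1) = 1/(s-1) from by
          rw [div_eq_div_iff (by linarith) (by linarith)]; ring]
      have h7 : 1/(s-1) ≤ 3/2 * t := by
        calc 1/(s-1) ≤ 2/s := by
              rw [div_le_div_iff₀ (by linarith) hs0]; linarith
          _ = 2*(t*t) := by rw [htt, div_eq_mul_inv]
          _ ≤ 3/2 * t := by nlinarith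
      rw [heven]
      linarith
    calc ∫ y, Fs s y = _ := hsplit
      _ ≤ 7*t + 3*t := by
          have := (h1.trans h2).trans (le_of_eq_of_le h3 h4)
          linarith [hcompl]
      _ = 10*t := by ring
  exact ⟨hInt, by rw [hIeq]; exact hlow, by rw [hIeq]; exact hupp⟩
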